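/- Let r, r̄ : ℤ → ℝ² be two nondegenerate discrete planar curves that have the same first and second centroaffine curvatures at every k ∈ ℤ. Then there exist an invertible 2×2 real matrix A and a constant vector C ∈ ℝ² such that r(k) = A·r̄(k) + C for all k ∈ ℤ; that is, the two curves are affinely equivalent. -/

import Mathlib

/-- Planar determinant of two vectors in ℝ². -/
def det2 (u v : Fin 2 → ℝ) : ℝ := u 0 * v 1 - u 1 * v 0

/-- Edge tangent vector of a discrete planar curve. -/
def tang2 (r : ℤ → Fin 2 → ℝ) (k : ℤ) : Fin 2 → ℝ := r (k + 1) - r k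

/-- Nondegeneracy of a discrete planar curve. -/
def Nondeg2 (r : ℤ → Fin 2 → ℝ) : Prop :=
  ∀ k : ℤ, det2 (tang2 r (k - 1)) (tang2 r k) ≠ 0

/-- First centroaffine curvature. -/
noncomputable def kappa2 (r : ℤ → Fin 2 → ℝ) (k : ℤ) : ℝ :=
  det2 (tang2 r k) (tang2 r (k + 1)) / det2 (tang2 r (k - 1)) (tang2 r k)

/-- Second centroaffine curvature. -/
noncomputable def kbar2 (r : ℤ → Fin 2 → ℝ) (k : ℤ) : ℝ :=
  det2 (tang2 r (k - 1)) (tang2 r (k + 1)) / det2 (tang2 r (k - 1)) (tang2 r k)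

lemma det2_self (a : Fin 2 → ℝ) : det2 a a = 0 := by simp [det2]; ring

lemma key2 (a b c : Fin 2 → ℝ) (hD : det2 a b ≠ 0) :
    c = (det2 a c / det2 a b) • b - (det2 b c / det2 a b) • a := by
  have h : det2 a b • c = det2 a c • b - det2 b c • a := by
    funext i
    fin_cases i <;>
    · simp only [det2, Pi.sub_apply, Pi.smul_apply, smul_eq_mul, Fin.zero_eta, Fin.mk_one]
      ring
  calc c = (det2 a b)⁻¹ • (det2 a b • c) := (inv_smul_smul₀ hD c).symm
    _ = _ := by
        rw [h, smul_sub, smul_smul, smul_smul, inv_mul_eq_div, inv_mul_eq_div]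

lemma tang_rec (s : ℤ → Fin 2 → ℝ) (hs : Nondeg2 s) (k : ℤ) :
    tang2 s (k + 1) = kbar2 s k • tang2 s k - kappa2 s k • tang2 s (k - 1) := by
  unfold kbar2 kappa2
  exact key2 _ _ _ (hs k)

lemma kappa_ne (s : ℤ → Fin 2 → ℝ) (hs : Nondeg2 s) (k : ℤ) : kappa2 s k ≠ 0 := by
  apply div_ne_zero _ (hs k)
  simpa using hs (k + 1)

noncomputable def amat (u v p q : Fin 2 → ℝ) : Matrix (Fin 2) (Fin 2) ℝ :=
  (det2 u v)⁻¹ •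
    !![v 1 * p 0 - u 1 * q 0, u 0 * q 0 - v 0 * p 0;
       v 1 * p 1 - u 1 * q 1, u 0 * q 1 - v 0 * p 1]

lemma amat_mulVec (u v p q : Fin 2 → ℝ) (w : Fin 2 → ℝ) :
    (amat u v p q).mulVec w = (det2 w v / det2 u v) • p + (det2 u w / det2 u v) • q := by
  rw [amat, Matrix.smul_mulVec]
  have h : (!![v 1 * p 0 - u 1 * q 0, u 0 * q 0 - v 0 * p 0;
       v 1 * p 1 - u 1 * q 1, u 0 * q 1 - v 0 * p 1]).mulVec w
      = det2 w v • p + det2 u w • q := by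
    funext i
    fin_cases i <;>
    · simp [Matrix.mulVec, dotProduct, Fin.sum_univ_two, det2]
      ring
  rw [h, smul_add, smul_smul, smul_smul, inv_mul_eq_div, inv_mul_eq_div]

lemma amat_u (u v p q : Fin 2 → ℝ) (hd : det2 u v ≠ 0) : (amat u v p q).mulVec u = p := by
  rw [amat_mulVec]
  simp [det2_self, div_self hd]

lemma amat_v (u v p q : Fin 2 → ℝ) (hd : det2 u v ≠ 0) : (amat u v p q).mulVec v = q := by
  rw [amat_mulVec]
  simp [det2_self, div_self hd]

lemma amat_det (u v p q : Fin 2 → ℝ) (hd : det2 u v ≠ 0) :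
    (amat u v p q).det = det2 p q / det2 u v := by
  rw [amat, Matrix.det_smul, Matrix.det_fin_two_of]
  have h : (v 1 * p 0 - u 1 * q 0) * (u 0 * q 1 - v 0 * p 1) -
      (u 0 * q 0 - v 0 * p 0) * (v 1 * p 1 - u 1 * q 1) = det2 u v * det2 p q := by
    simp only [det2]; ring
  rw [h]
  simp only [Fintype.card_fin, smul_eq_mul]
  field_simp

/-- Two discrete planar curves with the same centroaffine curvatures are affinely
equivalent. -/
theorem stmt_3 (r rb : ℤ → Fin 2 → ℝ) (hr : Nondeg2 r) (hrb : Nondeg2 rb)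
    (hκ : ∀ k : ℤ, kappa2 r k = kappa2 rb k) (hκbar : ∀ k : ℤ, kbar2 r k = kbar2 rb k) :
    ∃ (A : Matrix (Fin 2) (Fin 2) ℝ) (C : Fin 2 → ℝ), A.det ≠ 0 ∧
      ∀ k : ℤ, r k = A.mulVec (rb k) + C := by
  have hd : det2 (tang2 rb (-1)) (tang2 rb 0) ≠ 0 := by simpa using hrb 0
  have hd' : det2 (tang2 r (-1)) (tang2 r 0) ≠ 0 := by simpa using hr 0
  set A := amat (tang2 rb (-1)) (tang2 rb 0) (tang2 r (-1)) (tang2 r 0) with hA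
  have main : ∀ k : ℤ, A.mulVec (tang2 rb k) = tang2 r k ∧
      A.mulVec (tang2 rb (k - 1)) = tang2 r (k - 1) := by
    intro k
    induction k using Int.induction_on with
    | zero =>
      refine ⟨amat_v _ _ _ _ hd, ?_⟩
      simp only [zero_sub]
      exact amat_u _ _ _ _ hd
    | succ n ih =>
      refine ⟨?_, by simpa using ih.1⟩
      rw [tang_rec rb hrb n, tang_rec r hr n, Matrix.mulVec_sub, Matrix.mulVec_smul,
        Matrix.mulVec_smul, ih.1, ih.2, hκ n, hκbar n]
    | pred n ih =>
      set m : ℤ := -(n : ℤ) - 1 with hm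
      have hm1 : -(n : ℤ) = m + 1 := by rw [hm]; ring
      rw [hm1] at ih
      refine ⟨ih.2, ?_⟩
      have e1 : kappa2 rb m • tang2 rb (m - 1) = kbar2 rb m • tang2 rb m - tang2 rb (m + 1) := by
        rw [tang_rec rb hrb m]; module
      have e2 : kappa2 r m • tang2 r (m - 1) = kbar2 r m • tang2 r m - tang2 r (m + 1) := by
        rw [tang_rec r hr m]; module
      have hk : kappa2 rb m ≠ 0 := kappa_ne rb hrb m
      have key : kappa2 rb m • A.mulVec (tang2 rb (m - 1)) = kappa2 rb m • tang2 r (m - 1) := by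
        rw [← Matrix.mulVec_smul, e1, Matrix.mulVec_sub, Matrix.mulVec_smul,
          ih.2, ih.1, ← hκ m, e2, hκbar m]
      exact smul_right_injective _ hk key
  refine ⟨A, r 0 - A.mulVec (rb 0), ?_, ?_⟩
  · rw [hA, amat_det _ _ _ _ hd]
    exact div_ne_zero hd' hd
  · intro k
    induction k using Int.induction_on with
    | zero => module
    | succ n ih =>
      have ht := (main (n : ℤ)).1
      have h1 : r ((n : ℤ) + 1) = tang2 r (n : ℤ) + r (n : ℤ) := by unfold tang2; module
      have h2 : rb ((n : ℤ) + 1) = tang2 rb (n : ℤ) + rb (n : ℤ) := by unfold tang2; module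
      rw [h1, h2, Matrix.mulVec_add, ht, ih]
      module
    | pred n ih =>
      have ht := (main (-(n : ℤ) - 1)).1
      have hidx : (-(n : ℤ) - 1) + 1 = -(n : ℤ) := by ring
      have h1 : r (-(n : ℤ) - 1) = r (-(n : ℤ)) - tang2 r (-(n : ℤ) - 1) := by
        unfold tang2; rw [hidx]; module
      have h2 : rb (-(n : ℤ) - 1) = rb (-(n : ℤ)) - tang2 rb (-(n : ℤ) - 1) := by
        unfold tang2; rw [hidx]; module
      rw [h1, h2, Matrix.mulVec_sub, ht, ih]
      module
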